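/- Let 𝒳 = {X_1, …, X_t} be a finite set of events in a probability space with a negative dependency graph D = (𝒳, E). Suppose there are an integer ℓ and positive integers q_1, …, q_ℓ such that for each i ∈ [t] the closed neighbourhood Γ_D*(X_i) can be written as a union ⋃_{j∈[ℓ]} Q_{i,j} (not necessarily disjoint), where each Q_{i,j} is a clique in D of size |Q_{i,j}| ≤ q_j. If there is a positive real number μ such that P(X_i) ≤ μ / ∏_{j∈[ℓ]} (1 + μ·q_j) for all i ∈ [t], then P(⋂_{i∈[t]} X_iᶜ) > 0. -/

import Mathlib

open MeasureTheory

/-- `D` is a negative dependency graph for the events `X i` with respect to `μ`. -/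
def IsNegDepGraph {Ω : Type*} [MeasurableSpace Ω] (μ : Measure Ω) {t : ℕ}
    (X : Fin t → Set Ω) (D : SimpleGraph (Fin t)) : Prop :=
  ∀ (i : Fin t) (Z : Finset (Fin t)), (∀ j ∈ Z, j ≠ i ∧ ¬ D.Adj i j) →
    μ (X i ∩ ⋂ j ∈ Z, (X j)ᶜ) ≤ μ (X i) * μ (⋂ j ∈ Z, (X j)ᶜ)

open Finset in
private lemma one_add_sum_le_prod'' {ι : Type*} (s : Finset ι) (f : ι → ℝ)
    (hf : ∀ j ∈ s, 0 ≤ f j) : 1 + ∑ j ∈ s, f j ≤ ∏ j ∈ s, (1 + f j) := by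
  induction s using Finset.cons_induction with
  | empty => simp
  | cons a s ha ih =>
    rw [Finset.sum_cons, Finset.prod_cons]
    have h1 : 0 ≤ f a := hf a (Finset.mem_cons_self _ _)
    have h2 : ∀ j ∈ s, 0 ≤ f j := fun j hj => hf j (Finset.mem_cons_of_mem hj)
    have h3 := ih h2
    have hs : 0 ≤ ∑ j ∈ s, f j := Finset.sum_nonneg h2
    nlinarith


open Finset in
private lemma cell_key
    {Ω : Type*} [MeasurableSpace Ω] (μ : Measure Ω) [IsProbabilityMeasure μ]
    {t : ℕ} (X : Fin t → Set Ω) (hmeas : ∀ i, MeasurableSet (X i))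
    (D : SimpleGraph (Fin t)) [DecidableRel D.Adj]
    (hD : IsNegDepGraph μ X D)
    {ℓ : ℕ} (q : Fin ℓ → ℕ)
    (Q : Fin t → Fin ℓ → Finset (Fin t))
    (hcover : ∀ i, insert i (D.neighborFinset i) = Finset.univ.biUnion (Q i))
    (hclique : ∀ i j, D.IsClique (Q i j : Set (Fin t)))
    (hcard : ∀ i j, (Q i j).card ≤ q j)
    (μ₀ : ℝ) (hμ₀ : 0 < μ₀)
    (hP : ∀ i, μ (X i) ≤ ENNReal.ofReal (μ₀ / ∏ j : Fin ℓ, (1 + μ₀ * q j))) :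
    ∀ (n : ℕ) (S : Finset (Fin t)), S.card ≤ n → ∀ i ∉ S,
      μ (X i ∩ ⋂ j ∈ S, (X j)ᶜ) ≤
        ENNReal.ofReal (μ₀ / ∏ j : Fin ℓ, (1 + μ₀ * ((Q i j \ S).card : ℝ))) *
          μ (⋂ j ∈ S, (X j)ᶜ) := by
  -- denominators are positive
  have hden : ∀ (g : Fin ℓ → ℝ), (∀ j, 0 ≤ g j) → (0:ℝ) < ∏ j : Fin ℓ, (1 + μ₀ * g j) := by
    intro g hg
    exact Finset.prod_pos fun j _ => by nlinarith [hg j]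
  -- base-case bound : Fᵢ(S) is at least the uniform bound
  have hbase : ∀ (i : Fin t) (S : Finset (Fin t)),
      (μ₀ / ∏ j : Fin ℓ, (1 + μ₀ * q j)) ≤
        μ₀ / ∏ j : Fin ℓ, (1 + μ₀ * ((Q i j \ S).card : ℝ)) := by
    intro i S
    apply div_le_div_of_nonneg_left hμ₀.le (hden _ fun j => by positivity)
    apply Finset.prod_le_prod (fun j _ => by positivity)
    intro j _
    have : ((Q i j \ S).card : ℝ) ≤ (q j : ℝ) := by
      exact_mod_cast le_trans (Finset.card_le_card (Finset.sdiff_subset)) (hcard i j)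
    nlinarith
  -- the case where no element of S is adjacent to i
  have base : ∀ (S : Finset (Fin t)) (i : Fin t), i ∉ S → (∀ k ∈ S, ¬ D.Adj i k) →
      μ (X i ∩ ⋂ j ∈ S, (X j)ᶜ) ≤
        ENNReal.ofReal (μ₀ / ∏ j : Fin ℓ, (1 + μ₀ * ((Q i j \ S).card : ℝ))) *
          μ (⋂ j ∈ S, (X j)ᶜ) := by
    intro S i hi hadj
    refine le_trans (hD i S fun j hj => ⟨fun h => hi (h ▸ hj), hadj j hj⟩) ?_
    exact mul_le_mul_left ((hP i).trans (ENNReal.ofReal_le_ofReal (hbase i S))) _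
  intro n
  induction n with
  | zero =>
    intro S hS i hi
    have hSe : S = ∅ := Finset.card_eq_zero.mp (Nat.le_zero.mp hS)
    subst hSe
    exact base ∅ i hi (by simp)
  | succ n ih =>
    intro S hS i hi
    by_cases hex : ∃ k ∈ S, D.Adj i k
    swap
    · push_neg at hex
      exact base S i hi hex
    obtain ⟨k, hkS, hik⟩ := hex
    -- k belongs to some clique Q i j*
    have hkG : k ∈ Finset.univ.biUnion (Q i) := by
      rw [← hcover i]
      exact Finset.mem_insert_of_mem ((D.mem_neighborFinset i k).mpr hik)
    obtain ⟨j', -, hkQ⟩ := Finset.mem_biUnion.mp hkG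
    set S' := S.erase k with hS'def
    have hiS' : i ∉ S' := fun h => hi (Finset.erase_subset _ _ h)
    have hkS' : k ∉ S' := Finset.notMem_erase _ _
    have hcardS' : S'.card ≤ n := by
      rw [hS'def, Finset.card_erase_of_mem hkS]
      omega
    -- the set identity  A_S = (X k)ᶜ ∩ A_{S'}
    have hAset : (⋂ j ∈ S, (X j)ᶜ) = (X k)ᶜ ∩ ⋂ j ∈ S', (X j)ᶜ := by
      conv_lhs => rw [← Finset.insert_erase hkS]
      rw [Finset.set_biInter_insert]
    set N : ℕ := (Q i j' \ S).card with hNdef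
    -- |Q i j' \ S'| = N + 1
    have hsd : Q i j' \ S' = insert k (Q i j' \ S) := by
      ext x
      simp only [Finset.mem_sdiff, Finset.mem_insert, hS'def, Finset.mem_erase]
      constructor
      · rintro ⟨hxQ, hx⟩
        by_cases hxk : x = k
        · exact Or.inl hxk
        · exact Or.inr ⟨hxQ, fun hxS => hx ⟨hxk, hxS⟩⟩
      · rintro (rfl | ⟨hxQ, hxS⟩)
        · exact ⟨hkQ, fun h => h.1 rfl⟩
        · exact ⟨hxQ, fun h => hxS h.2⟩
    have hcardsd : (Q i j' \ S').card = N + 1 := by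
      rw [hsd, Finset.card_insert_of_notMem (by simp [Finset.mem_sdiff, hkS])]
    -- real-number abbreviations
    set c : ℝ := μ₀ / (1 + μ₀ * ((N : ℝ) + 1)) with hcdef
    have hNpos : (0:ℝ) < 1 + μ₀ * ((N : ℝ) + 1) := by positivity
    have hc0 : 0 ≤ c := by positivity
    have hc1 : c < 1 := by
      rw [hcdef, div_lt_one hNpos]
      nlinarith [Nat.cast_nonneg (α := ℝ) N]
    have h1c : 1 - c = (1 + μ₀ * (N : ℝ)) / (1 + μ₀ * ((N : ℝ) + 1)) := by
      rw [hcdef, one_sub_div (ne_of_gt hNpos)]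
      congr 1
      ring
    -- (a) :  F k S' ≤ c
    have hFk : μ₀ / ∏ j : Fin ℓ, (1 + μ₀ * ((Q k j \ S').card : ℝ)) ≤ c := by
      apply div_le_div_of_nonneg_left hμ₀.le hNpos
      -- 1 + μ₀ (N+1) ≤ ∏ (1 + μ₀ |Q k j \ S'|)
      have hsub : Q i j' \ S' ⊆ Finset.univ.biUnion fun j => Q k j \ S' := by
        intro x hx
        obtain ⟨hxQ, hxS⟩ := Finset.mem_sdiff.mp hx
        have hxG : x ∈ Finset.univ.biUnion (Q k) := by
          rw [← hcover k]
          by_cases hxk : x = k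
          · exact hxk ▸ Finset.mem_insert_self _ _
          · exact Finset.mem_insert_of_mem ((D.mem_neighborFinset k x).mpr
              (hclique i j' hkQ hxQ (fun h => hxk h.symm)))
        obtain ⟨j₂, -, hj₂⟩ := Finset.mem_biUnion.mp hxG
        exact Finset.mem_biUnion.mpr ⟨j₂, Finset.mem_univ _, Finset.mem_sdiff.mpr ⟨hj₂, hxS⟩⟩
      have hsum : (N : ℝ) + 1 ≤ ∑ j : Fin ℓ, ((Q k j \ S').card : ℝ) := by
        have h1 : N + 1 ≤ ∑ j : Fin ℓ, (Q k j \ S').card := by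
          calc N + 1 = (Q i j' \ S').card := hcardsd.symm
            _ ≤ (Finset.univ.biUnion fun j => Q k j \ S').card := Finset.card_le_card hsub
            _ ≤ ∑ j : Fin ℓ, (Q k j \ S').card := Finset.card_biUnion_le
        exact_mod_cast h1
      calc 1 + μ₀ * ((N:ℝ) + 1) ≤ 1 + μ₀ * ∑ j : Fin ℓ, ((Q k j \ S').card : ℝ) := by
            nlinarith
        _ = 1 + ∑ j : Fin ℓ, μ₀ * ((Q k j \ S').card : ℝ) := by rw [Finset.mul_sum]
        _ ≤ ∏ j : Fin ℓ, (1 + μ₀ * ((Q k j \ S').card : ℝ)) :=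
            one_add_sum_le_prod'' _ _ fun j _ => by positivity
    -- (b) :  F i S' ≤ F i S * (1 - c)
    have hFi : μ₀ / ∏ j : Fin ℓ, (1 + μ₀ * ((Q i j \ S').card : ℝ)) ≤
        (μ₀ / ∏ j : Fin ℓ, (1 + μ₀ * ((Q i j \ S).card : ℝ))) * (1 - c) := by
      rw [h1c, div_mul_div_comm]
      have hP1 : (0:ℝ) < ∏ j : Fin ℓ, (1 + μ₀ * ((Q i j \ S').card : ℝ)) :=
        hden _ fun j => by positivity
      have hP2 : (0:ℝ) < (∏ j : Fin ℓ, (1 + μ₀ * ((Q i j \ S).card : ℝ))) *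
          (1 + μ₀ * ((N:ℝ) + 1)) :=
        mul_pos (hden _ fun j => by positivity) hNpos
      rw [div_le_div_iff₀ hP1 hP2]
      have hkey : (∏ j : Fin ℓ, (1 + μ₀ * ((Q i j \ S).card : ℝ))) *
          (1 + μ₀ * ((N:ℝ) + 1)) ≤
          (∏ j : Fin ℓ, (1 + μ₀ * ((Q i j \ S').card : ℝ))) * (1 + μ₀ * (N:ℝ)) := by
        rw [← Finset.mul_prod_erase Finset.univ _ (Finset.mem_univ j'),
            ← Finset.mul_prod_erase Finset.univ
              (fun j => (1 + μ₀ * ((Q i j \ S').card : ℝ))) (Finset.mem_univ j'),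
            hcardsd]
        push_cast
        have hrest : ∏ j ∈ Finset.univ.erase j', (1 + μ₀ * ((Q i j \ S).card : ℝ)) ≤
            ∏ j ∈ Finset.univ.erase j', (1 + μ₀ * ((Q i j \ S').card : ℝ)) := by
          apply Finset.prod_le_prod (fun j _ => by positivity)
          intro j _
          have : (Q i j \ S).card ≤ (Q i j \ S').card :=
            Finset.card_le_card (Finset.sdiff_subset_sdiff le_rfl (Finset.erase_subset _ _))
          have : ((Q i j \ S).card : ℝ) ≤ ((Q i j \ S').card : ℝ) := by exact_mod_cast this
          nlinarith
        calc (1 + μ₀ * (N:ℝ)) * (∏ j ∈ Finset.univ.erase j', (1 + μ₀ * ((Q i j \ S).card : ℝ)))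
              * (1 + μ₀ * ((N:ℝ) + 1))
            = ((1 + μ₀ * (N:ℝ)) * (1 + μ₀ * ((N:ℝ) + 1))) *
                ∏ j ∈ Finset.univ.erase j', (1 + μ₀ * ((Q i j \ S).card : ℝ)) := by ring
          _ ≤ ((1 + μ₀ * (N:ℝ)) * (1 + μ₀ * ((N:ℝ) + 1))) *
                ∏ j ∈ Finset.univ.erase j', (1 + μ₀ * ((Q i j \ S').card : ℝ)) := by
              apply mul_le_mul_of_nonneg_left hrest
              positivity
          _ = (1 + μ₀ * ((N:ℝ) + 1)) *
                (∏ j ∈ Finset.univ.erase j', (1 + μ₀ * ((Q i j \ S').card : ℝ))) *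
                (1 + μ₀ * (N:ℝ)) := by ring
      calc μ₀ * ((∏ j : Fin ℓ, (1 + μ₀ * ((Q i j \ S).card : ℝ))) * (1 + μ₀ * ((N:ℝ) + 1)))
          ≤ μ₀ * ((∏ j : Fin ℓ, (1 + μ₀ * ((Q i j \ S').card : ℝ))) * (1 + μ₀ * (N:ℝ))) :=
            mul_le_mul_of_nonneg_left hkey hμ₀.le
        _ = μ₀ * (1 + μ₀ * (N:ℝ)) * ∏ j : Fin ℓ, (1 + μ₀ * ((Q i j \ S').card : ℝ)) := by ring
    -- measure-theoretic part
    have hmeasA' : MeasurableSet (⋂ j ∈ S', (X j)ᶜ) :=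
      MeasurableSet.biInter (Finset.countable_toSet _) fun j _ => (hmeas j).compl
    have hIHi := ih S' hcardS' i hiS'
    have hIHk := ih S' hcardS' k hkS'
    -- μ A' ≤ ofReal c * μ A' + μ A
    have hsplit : μ (⋂ j ∈ S', (X j)ᶜ) =
        μ ((⋂ j ∈ S', (X j)ᶜ) ∩ X k) + μ (⋂ j ∈ S, (X j)ᶜ) := by
      rw [hAset, Set.inter_comm ((X k)ᶜ), ← Set.diff_eq,
        measure_inter_add_diff _ (hmeas k)]
    have hXkA : μ ((⋂ j ∈ S', (X j)ᶜ) ∩ X k) ≤ ENNReal.ofReal c * μ (⋂ j ∈ S', (X j)ᶜ) := by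
      rw [Set.inter_comm]
      exact hIHk.trans (mul_le_mul_left (ENNReal.ofReal_le_ofReal hFk) _)
    have hfin : ENNReal.ofReal c * μ (⋂ j ∈ S', (X j)ᶜ) ≠ ⊤ :=
      ENNReal.mul_ne_top ENNReal.ofReal_ne_top (measure_ne_top μ _)
    have hA'leA : ENNReal.ofReal (1 - c) * μ (⋂ j ∈ S', (X j)ᶜ) ≤ μ (⋂ j ∈ S, (X j)ᶜ) := by
      rw [← ENNReal.add_le_add_iff_right hfin]
      calc ENNReal.ofReal (1 - c) * μ (⋂ j ∈ S', (X j)ᶜ) +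
            ENNReal.ofReal c * μ (⋂ j ∈ S', (X j)ᶜ)
          = (ENNReal.ofReal (1 - c) + ENNReal.ofReal c) * μ (⋂ j ∈ S', (X j)ᶜ) := by
            rw [add_mul]
        _ = μ (⋂ j ∈ S', (X j)ᶜ) := by
            rw [← ENNReal.ofReal_add (by linarith) hc0]
            norm_num
        _ = μ ((⋂ j ∈ S', (X j)ᶜ) ∩ X k) + μ (⋂ j ∈ S, (X j)ᶜ) := hsplit
        _ ≤ ENNReal.ofReal c * μ (⋂ j ∈ S', (X j)ᶜ) + μ (⋂ j ∈ S, (X j)ᶜ) :=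
            add_le_add_left hXkA _
        _ = μ (⋂ j ∈ S, (X j)ᶜ) + ENNReal.ofReal c * μ (⋂ j ∈ S', (X j)ᶜ) := by
            rw [add_comm]
    -- chain everything together
    have hsubA : (X i ∩ ⋂ j ∈ S, (X j)ᶜ) ⊆ X i ∩ ⋂ j ∈ S', (X j)ᶜ := by
      rw [hAset]
      exact Set.inter_subset_inter_right _ Set.inter_subset_right
    calc μ (X i ∩ ⋂ j ∈ S, (X j)ᶜ) ≤ μ (X i ∩ ⋂ j ∈ S', (X j)ᶜ) := measure_mono hsubA
      _ ≤ ENNReal.ofReal (μ₀ / ∏ j : Fin ℓ, (1 + μ₀ * ((Q i j \ S').card : ℝ))) *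
            μ (⋂ j ∈ S', (X j)ᶜ) := hIHi
      _ ≤ ENNReal.ofReal ((μ₀ / ∏ j : Fin ℓ, (1 + μ₀ * ((Q i j \ S).card : ℝ))) * (1 - c)) *
            μ (⋂ j ∈ S', (X j)ᶜ) := mul_le_mul_left (ENNReal.ofReal_le_ofReal hFi) _
      _ = ENNReal.ofReal (μ₀ / ∏ j : Fin ℓ, (1 + μ₀ * ((Q i j \ S).card : ℝ))) *
            (ENNReal.ofReal (1 - c) * μ (⋂ j ∈ S', (X j)ᶜ)) := by
          rw [ENNReal.ofReal_mul
            (div_nonneg hμ₀.le (le_of_lt (hden _ fun j => by positivity))), mul_assoc]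
      _ ≤ ENNReal.ofReal (μ₀ / ∏ j : Fin ℓ, (1 + μ₀ * ((Q i j \ S).card : ℝ))) *
            μ (⋂ j ∈ S, (X j)ᶜ) := mul_le_mul_right hA'leA _

/-- **Remark after Lemma 10, first part** (condition (3')): suppose that the closed
neighbourhood of each event `X i` in a negative dependency graph `D` is a union of `ℓ`
cliques `Q i j` with `|Q i j| ≤ q j`.  If there is `μ₀ > 0` with
`P(X i) ≤ μ₀ / Π_j (1 + μ₀·q j)` for all `i`, then with positive probability no event
occurs. -/
theorem cluster_expansion_local_lemma_clique_cover
    {Ω : Type*} [MeasurableSpace Ω] (μ : Measure Ω) [IsProbabilityMeasure μ]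
    {t : ℕ} (X : Fin t → Set Ω) (hmeas : ∀ i, MeasurableSet (X i))
    (D : SimpleGraph (Fin t)) [DecidableRel D.Adj]
    (hD : IsNegDepGraph μ X D)
    (ℓ : ℕ) (q : Fin ℓ → ℕ) (hq : ∀ j, 0 < q j)
    (Q : Fin t → Fin ℓ → Finset (Fin t))
    (hcover : ∀ i, insert i (D.neighborFinset i) = Finset.univ.biUnion (Q i))
    (hclique : ∀ i j, D.IsClique (Q i j : Set (Fin t)))
    (hcard : ∀ i j, (Q i j).card ≤ q j)
    (μ₀ : ℝ) (hμ₀ : 0 < μ₀)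
    (hP : ∀ i, μ (X i) ≤ ENNReal.ofReal (μ₀ / ∏ j : Fin ℓ, (1 + μ₀ * q j))) :
    0 < μ (⋂ i, (X i)ᶜ) := by
  have key := cell_key μ X hmeas D hD q Q hcover hclique hcard μ₀ hμ₀ hP
  -- positivity for every finite intersection
  have hpos : ∀ S : Finset (Fin t), 0 < μ (⋂ j ∈ S, (X j)ᶜ) := by
    intro S
    induction S using Finset.induction_on with
    | empty => simp
    | @insert i S hiS ihS =>
      -- F i S ≤ μ₀ / (1 + μ₀) < 1
      have hj₀ : ∃ j₀, i ∈ Q i j₀ := by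
        have : i ∈ Finset.univ.biUnion (Q i) := by
          rw [← hcover i]; exact Finset.mem_insert_self _ _
        obtain ⟨j₀, -, h⟩ := Finset.mem_biUnion.mp this
        exact ⟨j₀, h⟩
      obtain ⟨j₀, hij₀⟩ := hj₀
      have hFle : μ₀ / ∏ j : Fin ℓ, (1 + μ₀ * ((Q i j \ S).card : ℝ)) ≤ μ₀ / (1 + μ₀) := by
        apply div_le_div_of_nonneg_left hμ₀.le (by positivity)
        have h1 : (1:ℝ) + μ₀ ≤ 1 + μ₀ * ((Q i j₀ \ S).card : ℝ) := by
          have : 1 ≤ (Q i j₀ \ S).card := by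
            rw [Nat.one_le_iff_ne_zero, ← Nat.pos_iff_ne_zero, Finset.card_pos]
            exact ⟨i, Finset.mem_sdiff.mpr ⟨hij₀, hiS⟩⟩
          have : (1:ℝ) ≤ ((Q i j₀ \ S).card : ℝ) := by exact_mod_cast this
          nlinarith
        have hone : (1:ℝ) ≤ ∏ j ∈ Finset.univ.erase j₀, (1 + μ₀ * ((Q i j \ S).card : ℝ)) := by
          have := Finset.prod_le_prod (s := Finset.univ.erase j₀)
            (f := fun _ => (1:ℝ)) (g := fun j => 1 + μ₀ * ((Q i j \ S).card : ℝ))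
            (fun j _ => zero_le_one) (fun j _ => le_add_of_nonneg_right (by positivity))
          simpa using this
        calc (1:ℝ) + μ₀ ≤ 1 + μ₀ * ((Q i j₀ \ S).card : ℝ) := h1
          _ = (1 + μ₀ * ((Q i j₀ \ S).card : ℝ)) * 1 := (mul_one _).symm
          _ ≤ (1 + μ₀ * ((Q i j₀ \ S).card : ℝ)) *
                ∏ j ∈ Finset.univ.erase j₀, (1 + μ₀ * ((Q i j \ S).card : ℝ)) :=
              mul_le_mul_of_nonneg_left hone (by positivity)
          _ = ∏ j : Fin ℓ, (1 + μ₀ * ((Q i j \ S).card : ℝ)) :=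
              Finset.mul_prod_erase Finset.univ
                (f := fun j => 1 + μ₀ * ((Q i j \ S).card : ℝ)) (Finset.mem_univ j₀)
      have hlt : μ (X i ∩ ⋂ j ∈ S, (X j)ᶜ) < μ (⋂ j ∈ S, (X j)ᶜ) := by
        have h1 := key S.card S le_rfl i hiS
        have h2 : ENNReal.ofReal (μ₀ / ∏ j : Fin ℓ, (1 + μ₀ * ((Q i j \ S).card : ℝ))) *
            μ (⋂ j ∈ S, (X j)ᶜ) < 1 * μ (⋂ j ∈ S, (X j)ᶜ) := by
          apply ENNReal.mul_lt_mul_iff_left (ne_of_gt ihS) (measure_ne_top μ _) |>.mpr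
          calc ENNReal.ofReal (μ₀ / ∏ j : Fin ℓ, (1 + μ₀ * ((Q i j \ S).card : ℝ)))
              ≤ ENNReal.ofReal (μ₀ / (1 + μ₀)) := ENNReal.ofReal_le_ofReal hFle
            _ < 1 := by
                rw [ENNReal.ofReal_lt_one, div_lt_one (by positivity)]
                linarith
        calc μ (X i ∩ ⋂ j ∈ S, (X j)ᶜ) ≤ _ := h1
          _ < 1 * μ (⋂ j ∈ S, (X j)ᶜ) := h2
          _ = μ (⋂ j ∈ S, (X j)ᶜ) := one_mul _
      have hsplit : μ (⋂ j ∈ S, (X j)ᶜ) =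
          μ ((⋂ j ∈ S, (X j)ᶜ) ∩ X i) + μ (⋂ j ∈ (insert i S), (X j)ᶜ) := by
        rw [Finset.set_biInter_insert, Set.inter_comm ((X i)ᶜ), ← Set.diff_eq,
          measure_inter_add_diff _ (hmeas i)]
      rw [pos_iff_ne_zero]
      intro h0
      rw [h0, add_zero, Set.inter_comm] at hsplit
      exact absurd hsplit.symm (ne_of_lt hlt)
  have huniv : (⋂ i, (X i)ᶜ) = ⋂ j ∈ (Finset.univ : Finset (Fin t)), (X j)ᶜ := by simp
  rw [huniv]
  exact hpos Finset.univ
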